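/- For every z ∈ ℂ^{n+1} with H_ε(z) ≠ 0 and every v ∈ ℂ^{n+1}, one has (Dα_ε(z)[X(z)])(v) − (Dα_ε(z)[v])(X(z)) = −D(H_ε^{−1}·Δ_ε)(z)(v); that is, the contraction of the exterior derivative of the 1-form α_ε with the vector field X equals minus the differential of the function H_ε^{−1}·Δ_ε. -/

import Mathlib

open Complex

/-- The index `2(j+1)` in `Fin (2m+2)`, for `j : Fin m`. -/
def idxA (m : ℕ) (j : Fin m) : Fin (2 * m + 2) := ⟨2 * j.val + 2, by have := j.isLt; omega⟩

/-- The index `2(j+1)+1` in `Fin (2m+2)`, for `j : Fin m`. -/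
def idxB (m : ℕ) (j : Fin m) : Fin (2 * m + 2) := ⟨2 * j.val + 3, by have := j.isLt; omega⟩

/-- `Δ_ε(z) = ∑_{j=1}^m ε_j(|z_{2j}|² − |z_{2j+1}|²)`. -/
noncomputable def DeltaEps (m : ℕ) (ε : Fin m → ℝ) (z : Fin (2 * m + 2) → ℂ) : ℝ :=
  ∑ j : Fin m, ε j * (‖z (idxA m j)‖ ^ 2 - ‖z (idxB m j)‖ ^ 2)

/-- `H_ε(z) = ∑_k |z_k|² + Δ_ε(z)`. -/
noncomputable def HepsN (m : ℕ) (ε : Fin m → ℝ) (z : Fin (2 * m + 2) → ℂ) : ℝ :=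
  ∑ k, ‖z k‖ ^ 2 + DeltaEps m ε z

/-- The vector field `X` on `ℂ^{n+1}` (`n = 2m+1`): `X(z)₀ = X(z)₁ = 0`,
`X(z)_{2j} = i·ε_j·z_{2j}`, `X(z)_{2j+1} = −i·ε_j·z_{2j+1}`. -/
noncomputable def Xvf (m : ℕ) (ε : Fin m → ℝ) (z : Fin (2 * m + 2) → ℂ) :
    Fin (2 * m + 2) → ℂ := fun k =>
  if h : k.val ≤ 1 then 0
  else if k.val % 2 = 0 then
    Complex.I * ((ε ⟨k.val / 2 - 1, by have := k.isLt; omega⟩ : ℝ) : ℂ) * z k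
  else
    -(Complex.I * ((ε ⟨k.val / 2 - 1, by have := k.isLt; omega⟩ : ℝ) : ℂ) * z k)

/-- The `1`-form `α_ε(z)(v) = H_ε(z)⁻¹·∑_k Im(conj(z_k)·v_k)`. -/
noncomputable def alphaN (m : ℕ) (ε : Fin m → ℝ) (z v : Fin (2 * m + 2) → ℂ) : ℝ :=
  (HepsN m ε z)⁻¹ * ∑ k, ((starRingEnd ℂ) (z k) * v k).im


open Finset

noncomputable def reCM (c : ℂ) : ℂ →L[ℝ] ℝ :=
  Complex.reCLM.comp (((ContinuousLinearMap.mul ℂ ℂ) ((starRingEnd ℂ) c)).restrictScalars ℝ)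

noncomputable def imCM (c : ℂ) : ℂ →L[ℝ] ℝ :=
  Complex.imCLM.comp (((ContinuousLinearMap.mul ℂ ℂ) ((starRingEnd ℂ) c)).restrictScalars ℝ)

@[simp] lemma reCM_apply (c u : ℂ) : reCM c u = ((starRingEnd ℂ) c * u).re := rfl
@[simp] lemma imCM_apply (c u : ℂ) : imCM c u = ((starRingEnd ℂ) c * u).im := rfl

lemma hasFDerivAt_abs_sq (c : ℂ) :
    HasFDerivAt (fun x : ℂ => ‖x‖ ^ 2) ((2:ℝ) • reCM c) c := by
  have h2 : (fun x : ℂ => ‖x‖ ^ 2) = fun x : ℂ => x.re * x.re + x.im * x.im := by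
    funext x; rw [Complex.sq_norm, Complex.normSq_apply]
  rw [h2]
  have h1 := (Complex.reCLM.hasFDerivAt (x := c)).fun_mul (Complex.reCLM.hasFDerivAt (x := c)) |>.fun_add
    ((Complex.imCLM.hasFDerivAt (x := c)).fun_mul (Complex.imCLM.hasFDerivAt (x := c)))
  refine h1.congr_fderiv ?_
  ext u
  simp [Complex.mul_re]
  ring

noncomputable def prC (m : ℕ) (k : Fin (2*m+2)) : (Fin (2*m+2) → ℂ) →L[ℝ] ℂ :=
  ContinuousLinearMap.proj k

@[simp] lemma prC_apply (m : ℕ) (k : Fin (2*m+2)) (y : Fin (2*m+2) → ℂ) : prC m k y = y k := rfl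

lemma sum_range_two_mul (n : ℕ) (g : ℕ → ℝ) :
    ∑ i ∈ Finset.range (2*n), g i = ∑ j ∈ Finset.range n, (g (2*j) + g (2*j+1)) := by
  induction n with
  | zero => simp
  | succ n ih =>
    have h : 2*(n+1) = (2*n)+1+1 := by ring
    rw [h, Finset.sum_range_succ, Finset.sum_range_succ, ih, Finset.sum_range_succ]
    ring

lemma sum_fin_split (m : ℕ) (f : Fin (2*m+2) → ℝ)
    (h0 : f ⟨0, by omega⟩ = 0) (h1 : f ⟨1, by omega⟩ = 0) :
    ∑ k, f k = ∑ j : Fin m, (f (idxA m j) + f (idxB m j)) := by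
  classical
  set g : ℕ → ℝ := fun i => if h : i < 2*m+2 then f ⟨i, h⟩ else 0 with hg
  have hgk : ∀ k : Fin (2*m+2), f k = g k.val := by
    intro k; rw [hg]; simp only; rw [dif_pos k.isLt]
  have hl : ∑ k : Fin (2*m+2), f k = ∑ i ∈ Finset.range (2*m+2), g i := by
    rw [← Fin.sum_univ_eq_sum_range g (2*m+2)]
    exact Finset.sum_congr rfl fun k _ => hgk k
  have hr : ∑ j : Fin m, (f (idxA m j) + f (idxB m j))
      = ∑ j ∈ Finset.range m, (g (2*j+2) + g (2*j+3)) := by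
    rw [← Fin.sum_univ_eq_sum_range (fun j => g (2*j+2) + g (2*j+3)) m]
    refine Finset.sum_congr rfl fun j _ => ?_
    rw [hgk (idxA m j), hgk (idxB m j)]; rfl
  have hg0 : g 0 = 0 := by rw [hg]; simp only; rw [dif_pos (by omega)]; exact h0
  have hg1 : g 1 = 0 := by rw [hg]; simp only; rw [dif_pos (by omega)]; exact h1
  rw [hl, hr]
  have h22 : 2*m+2 = 2*(m+1) := by ring
  rw [h22, sum_range_two_mul, Finset.sum_range_succ']
  have hpt : ∀ j, g (2*(j+1)) + g (2*(j+1)+1) = g (2*j+2) + g (2*j+3) := by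
    intro j
    have e1 : 2*(j+1) = 2*j+2 := by ring
    have e2 : 2*j+2+1 = 2*j+3 := by omega
    rw [e1, e2]
  rw [Finset.sum_congr rfl (fun j _ => hpt j)]
  norm_num [hg0, hg1]

lemma Xvf_low (m : ℕ) (ε : Fin m → ℝ) (z : Fin (2*m+2) → ℂ) (k : Fin (2*m+2))
    (hk : k.val ≤ 1) : Xvf m ε z k = 0 := by
  unfold Xvf; rw [dif_pos hk]

lemma Xvf_idxA (m : ℕ) (ε : Fin m → ℝ) (z : Fin (2*m+2) → ℂ) (j : Fin m) :
    Xvf m ε z (idxA m j) = Complex.I * ((ε j : ℝ) : ℂ) * z (idxA m j) := by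
  have hj := j.isLt
  unfold Xvf idxA
  rw [dif_neg (by simp only; omega), if_pos (by simp only; omega)]
  congr 3
  congr 1
  apply Fin.ext
  simp

lemma Xvf_idxB (m : ℕ) (ε : Fin m → ℝ) (z : Fin (2*m+2) → ℂ) (j : Fin m) :
    Xvf m ε z (idxB m j) = -(Complex.I * ((ε j : ℝ) : ℂ) * z (idxB m j)) := by
  have hj := j.isLt
  unfold Xvf idxB
  rw [dif_neg (by simp only; omega), if_neg (by simp only; omega)]
  congr 4
  congr 1
  apply Fin.ext
  simp
  omega

lemma re_conj_X (m : ℕ) (ε : Fin m → ℝ) (z : Fin (2*m+2) → ℂ) (k : Fin (2*m+2)) :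
    (((starRingEnd ℂ) (z k)) * Xvf m ε z k).re = 0 := by
  unfold Xvf
  split_ifs with h1 h2
  · simp
  · simp only [Complex.mul_re, Complex.mul_im, Complex.conj_re, Complex.conj_im,
      Complex.I_re, Complex.I_im, Complex.ofReal_re, Complex.ofReal_im]
    ring
  · simp only [mul_neg, Complex.neg_re, Complex.mul_re, Complex.mul_im, Complex.conj_re,
      Complex.conj_im, Complex.I_re, Complex.I_im, Complex.ofReal_re, Complex.ofReal_im]
    ring

noncomputable def DD (m : ℕ) (ε : Fin m → ℝ) (z : Fin (2*m+2) → ℂ) :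
    (Fin (2*m+2) → ℂ) →L[ℝ] ℝ :=
  ∑ j : Fin m, ε j • (((2:ℝ) • reCM (z (idxA m j))).comp (prC m (idxA m j))
    - ((2:ℝ) • reCM (z (idxB m j))).comp (prC m (idxB m j)))

noncomputable def HD (m : ℕ) (ε : Fin m → ℝ) (z : Fin (2*m+2) → ℂ) :
    (Fin (2*m+2) → ℂ) →L[ℝ] ℝ :=
  (∑ k : Fin (2*m+2), ((2:ℝ) • reCM (z k)).comp (prC m k)) + DD m ε z

noncomputable def BB (m : ℕ) (w : Fin (2*m+2) → ℂ) : (Fin (2*m+2) → ℂ) →L[ℝ] ℝ :=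
  ∑ k : Fin (2*m+2), -((imCM (w k)).comp (prC m k))

lemma DD_apply (m : ℕ) (ε : Fin m → ℝ) (z u : Fin (2*m+2) → ℂ) :
    DD m ε z u = ∑ j : Fin m, ε j *
      (2 * (((starRingEnd ℂ) (z (idxA m j))) * u (idxA m j)).re
        - 2 * (((starRingEnd ℂ) (z (idxB m j))) * u (idxB m j)).re) := by
  simp [DD]

lemma HD_apply (m : ℕ) (ε : Fin m → ℝ) (z u : Fin (2*m+2) → ℂ) :
    HD m ε z u = (∑ k : Fin (2*m+2), 2 * (((starRingEnd ℂ) (z k)) * u k).re) + DD m ε z u := by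
  simp [HD]

lemma BB_apply (m : ℕ) (w u : Fin (2*m+2) → ℂ) :
    BB m w u = ∑ k : Fin (2*m+2), -(((starRingEnd ℂ) (w k)) * u k).im := by
  simp only [BB, ContinuousLinearMap.coe_sum', Finset.sum_apply, ContinuousLinearMap.neg_apply,
    ContinuousLinearMap.comp_apply, imCM_apply, prC_apply]

lemma hasFD_D (m : ℕ) (ε : Fin m → ℝ) (z : Fin (2*m+2) → ℂ) :
    HasFDerivAt (fun y => DeltaEps m ε y) (DD m ε z) z := by
  unfold DeltaEps DD
  exact HasFDerivAt.fun_sum fun j _ =>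
    ((((hasFDerivAt_abs_sq (z (idxA m j))).comp z (prC m (idxA m j)).hasFDerivAt).sub
      ((hasFDerivAt_abs_sq (z (idxB m j))).comp z (prC m (idxB m j)).hasFDerivAt)).const_mul
      (ε j))

lemma hasFD_H (m : ℕ) (ε : Fin m → ℝ) (z : Fin (2*m+2) → ℂ) :
    HasFDerivAt (fun y => HepsN m ε y) (HD m ε z) z := by
  unfold HepsN HD
  exact (HasFDerivAt.fun_sum fun k _ =>
    (hasFDerivAt_abs_sq (z k)).comp z (prC m k).hasFDerivAt).fun_add (hasFD_D m ε z)

lemma im_conj_swap (a b : ℂ) :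
    ((starRingEnd ℂ) a * b).im = -(((starRingEnd ℂ) b * a).im) := by
  simp [Complex.mul_im]; ring

lemma hasFD_B (m : ℕ) (z w : Fin (2*m+2) → ℂ) :
    HasFDerivAt (fun y : Fin (2*m+2) → ℂ => ∑ k, ((starRingEnd ℂ) (y k) * w k).im)
      (BB m w) z := by
  have h : (fun y : Fin (2*m+2) → ℂ => ∑ k, ((starRingEnd ℂ) (y k) * w k).im)
      = fun y => BB m w y := by
    funext y
    rw [BB_apply]
    exact Finset.sum_congr rfl fun k _ => im_conj_swap _ _
  rw [h]
  exact (BB m w).hasFDerivAt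

/-- For every `z` with `H_ε(z) ≠ 0` and every `v`:
`(Dα_ε(z)[X(z)])(v) − (Dα_ε(z)[v])(X(z)) = −D(H_ε⁻¹·Δ_ε)(z)(v)`, i.e. the contraction of the
exterior derivative of `α_ε` with `X` equals minus the differential of `H_ε⁻¹·Δ_ε`. -/
theorem contraction_exterior_derivative_alphaN (m : ℕ) (hm : 1 ≤ m) (ε : Fin m → ℝ)
    (z : Fin (2 * m + 2) → ℂ) (hz : HepsN m ε z ≠ 0) (v : Fin (2 * m + 2) → ℂ) :
    fderiv ℝ (fun y => alphaN m ε y v) z (Xvf m ε z)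
        - fderiv ℝ (fun y => alphaN m ε y (Xvf m ε z)) z v
      = -(fderiv ℝ (fun y => (HepsN m ε y)⁻¹ * DeltaEps m ε y) z v) := by
  have hH := hasFD_H m ε z
  have hDder := hasFD_D m ε z
  have hinv : HasFDerivAt (fun y => (HepsN m ε y)⁻¹)
      ((-(ContinuousLinearMap.mulLeftRight ℝ ℝ (HepsN m ε z)⁻¹ (HepsN m ε z)⁻¹)).comp
        (HD m ε z)) z :=
    (hasFDerivAt_inv' hz).comp z hH
  have e1 : fderiv ℝ (fun y => alphaN m ε y v) z
      = (HepsN m ε z)⁻¹ • BB m v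
        + (∑ k, ((starRingEnd ℂ) (z k) * v k).im) •
          ((-(ContinuousLinearMap.mulLeftRight ℝ ℝ (HepsN m ε z)⁻¹ (HepsN m ε z)⁻¹)).comp
            (HD m ε z)) := by
    refine HasFDerivAt.fderiv ?_
    simp only [alphaN]
    exact hinv.mul (hasFD_B m z v)
  have e2 : fderiv ℝ (fun y => alphaN m ε y (Xvf m ε z)) z
      = (HepsN m ε z)⁻¹ • BB m (Xvf m ε z)
        + (∑ k, ((starRingEnd ℂ) (z k) * Xvf m ε z k).im) •
          ((-(ContinuousLinearMap.mulLeftRight ℝ ℝ (HepsN m ε z)⁻¹ (HepsN m ε z)⁻¹)).comp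
            (HD m ε z)) := by
    refine HasFDerivAt.fderiv ?_
    simp only [alphaN]
    exact hinv.mul (hasFD_B m z (Xvf m ε z))
  have e3 : fderiv ℝ (fun y => (HepsN m ε y)⁻¹ * DeltaEps m ε y) z
      = (HepsN m ε z)⁻¹ • DD m ε z
        + DeltaEps m ε z •
          ((-(ContinuousLinearMap.mulLeftRight ℝ ℝ (HepsN m ε z)⁻¹ (HepsN m ε z)⁻¹)).comp
            (HD m ε z)) :=
    HasFDerivAt.fderiv (hinv.mul hDder)
  have F1 : HD m ε z (Xvf m ε z) = 0 := by
    rw [HD_apply, DD_apply]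
    simp only [re_conj_X, mul_zero, sub_self, Finset.sum_const_zero, add_zero]
  have F2 : (∑ k, ((starRingEnd ℂ) (z k) * Xvf m ε z k).im) = DeltaEps m ε z := by
    rw [sum_fin_split m (fun k => ((starRingEnd ℂ) (z k) * Xvf m ε z k).im) ?h0 ?h1]
    case h0 => simp only [Xvf_low m ε z ⟨0, by omega⟩ (by norm_num), mul_zero, Complex.zero_im]
    case h1 => simp only [Xvf_low m ε z ⟨1, by omega⟩ (by norm_num), mul_zero, Complex.zero_im]
    unfold DeltaEps
    refine Finset.sum_congr rfl fun j _ => ?_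
    rw [Xvf_idxA, Xvf_idxB]
    simp only [Complex.sq_norm, Complex.normSq_apply, mul_neg, Complex.neg_im,
      Complex.mul_im, Complex.mul_re, Complex.conj_re, Complex.conj_im,
      Complex.I_re, Complex.I_im, Complex.ofReal_re, Complex.ofReal_im]
    ring
  have F3 : BB m v (Xvf m ε z) = -(BB m (Xvf m ε z) v) := by
    rw [BB_apply, BB_apply, ← Finset.sum_neg_distrib]
    refine Finset.sum_congr rfl fun k _ => ?_
    rw [im_conj_swap]
  have F4 : DD m ε z v = 2 * BB m (Xvf m ε z) v := by
    rw [DD_apply, BB_apply]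
    rw [sum_fin_split m (fun k => -(((starRingEnd ℂ) (Xvf m ε z k)) * v k).im) ?f0 ?f1]
    case f0 => simp only [Xvf_low m ε z ⟨0, by omega⟩ (by norm_num), map_zero, zero_mul,
      Complex.zero_im, neg_zero]
    case f1 => simp only [Xvf_low m ε z ⟨1, by omega⟩ (by norm_num), map_zero, zero_mul,
      Complex.zero_im, neg_zero]
    rw [Finset.mul_sum]
    refine Finset.sum_congr rfl fun j _ => ?_
    rw [Xvf_idxA, Xvf_idxB]
    simp only [map_mul, map_neg, Complex.conj_I, Complex.conj_ofReal, mul_neg, neg_mul,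
      neg_neg, Complex.neg_im, Complex.neg_re, Complex.mul_im, Complex.mul_re,
      Complex.conj_re, Complex.conj_im, Complex.I_re, Complex.I_im,
      Complex.ofReal_re, Complex.ofReal_im]
    ring
  rw [e1, e2, e3]
  simp only [ContinuousLinearMap.add_apply, ContinuousLinearMap.smul_apply,
    ContinuousLinearMap.comp_apply, ContinuousLinearMap.neg_apply,
    ContinuousLinearMap.mulLeftRight_apply, smul_eq_mul]
  rw [F1, F2, F3, F4]
  ring
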